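/- Let C > 0 and suppose that lim_{m→∞} (1/√m)·∫₀¹ |W_m(ω)| dω = C. Then liminf_{m→∞} (1/√m)·∫₀¹ |S_m(ω)| dω ≥ (√2 − 1)·C. -/

import Mathlib

open MeasureTheory Real

/-- The quadratic Weyl sum `S_m(ω) = ∑_{j=1}^m exp(2πiω(j²-j))`. -/
noncomputable def S (ω : ℝ) (m : ℕ) : ℂ :=
  ∑ j ∈ Finset.Icc 1 m,
    Complex.exp (2 * (Real.pi : ℂ) * Complex.I * (ω : ℂ) * ((j : ℂ) ^ 2 - (j : ℂ)))

/-- The purely quadratic Weyl sum `W_m(ω) = ∑_{j=1}^m exp(2πiωj²)`, with `W_0 = 0`. -/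
noncomputable def W (ω : ℝ) (m : ℕ) : ℂ :=
  ∑ j ∈ Finset.Icc 1 m,
    Complex.exp (2 * (Real.pi : ℂ) * Complex.I * (ω : ℂ) * (j : ℂ) ^ 2)

/-- odd-square Weyl sum -/
noncomputable def T (θ : ℝ) (m : ℕ) : ℂ :=
  ∑ j ∈ Finset.Icc 1 m,
    Complex.exp (2 * (Real.pi : ℂ) * Complex.I * (θ : ℂ) * (2 * (j : ℂ) - 1) ^ 2)

lemma sum_Icc_succ (f : ℕ → ℂ) (n : ℕ) :
    ∑ j ∈ Finset.Icc 1 (n + 1), f j = (∑ j ∈ Finset.Icc 1 n, f j) + f (n + 1) := by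
  rw [← Finset.insert_Icc_right_eq_Icc_add_one (by omega), Finset.sum_insert (by simp)]
  ring

lemma T_eq (θ : ℝ) (m : ℕ) : T θ m = W θ (2 * m) - W (4 * θ) m := by
  induction m with
  | zero => simp [T, W]
  | succ n ih =>
    have hT : T θ (n + 1) = T θ n
        + Complex.exp (2 * (Real.pi : ℂ) * Complex.I * θ * (2 * ((n + 1 : ℕ) : ℂ) - 1) ^ 2) := by
      simp only [T]
      rw [sum_Icc_succ]
    have hW2 : W θ (2 * (n + 1)) = W θ (2 * n)
        + Complex.exp (2 * (Real.pi : ℂ) * Complex.I * θ * ((2 * n + 1 : ℕ) : ℂ) ^ 2)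
        + Complex.exp (2 * (Real.pi : ℂ) * Complex.I * θ * ((2 * n + 1 + 1 : ℕ) : ℂ) ^ 2) := by
      rw [show 2 * (n + 1) = (2 * n + 1) + 1 by ring]
      simp only [W]
      rw [sum_Icc_succ, sum_Icc_succ]
    have hW4 : W (4 * θ) (n + 1) = W (4 * θ) n
        + Complex.exp (2 * (Real.pi : ℂ) * Complex.I * ((4 * θ : ℝ) : ℂ)
            * ((n + 1 : ℕ) : ℂ) ^ 2) := by
      simp only [W]
      rw [sum_Icc_succ]
    rw [hT, hW2, hW4, ih]
    have e1 : Complex.exp (2 * (Real.pi : ℂ) * Complex.I * θ * (2 * ((n + 1 : ℕ) : ℂ) - 1) ^ 2)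
        = Complex.exp (2 * (Real.pi : ℂ) * Complex.I * θ * ((2 * n + 1 : ℕ) : ℂ) ^ 2) := by
      congr 1; push_cast; ring
    have e2 : Complex.exp (2 * (Real.pi : ℂ) * Complex.I * ((4 * θ : ℝ) : ℂ)
            * ((n + 1 : ℕ) : ℂ) ^ 2)
        = Complex.exp (2 * (Real.pi : ℂ) * Complex.I * θ * ((2 * n + 1 + 1 : ℕ) : ℂ) ^ 2) := by
      congr 1; push_cast; ring
    rw [e1, e2]
    ring


lemma normS_eq (ω : ℝ) (m : ℕ) : ‖S ω m‖ = ‖T (ω / 4) m‖ := by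
  have key : S ω m = Complex.exp (((-(π * ω / 2) : ℝ) : ℂ) * Complex.I) * T (ω / 4) m := by
    rw [S, T, Finset.mul_sum]
    refine Finset.sum_congr rfl fun j hj => ?_
    rw [← Complex.exp_add]
    congr 1
    push_cast
    ring
  rw [key, norm_mul]
  have : ‖Complex.exp (((-(π * ω / 2) : ℝ) : ℂ) * Complex.I)‖ = 1 :=
    Complex.norm_exp_ofReal_mul_I _
  rw [this, one_mul]

lemma W_per (m : ℕ) : Function.Periodic (fun ω : ℝ => ‖W ω m‖) 1 := by
  intro ω
  have : W (ω + 1) m = W ω m := by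
    rw [W, W]
    refine Finset.sum_congr rfl fun j hj => ?_
    have : ((2 : ℂ) * π * Complex.I * ((ω + 1 : ℝ) : ℂ) * (j : ℂ) ^ 2)
        = 2 * (π : ℂ) * Complex.I * (ω : ℂ) * (j : ℂ) ^ 2 + ((j ^ 2 : ℕ) : ℤ) * (2 * π * Complex.I) := by
      push_cast; ring
    rw [this, Complex.exp_add, Complex.exp_int_mul_two_pi_mul_I, mul_one]
  simp only [this]

lemma T_per (m : ℕ) : Function.Periodic (fun θ : ℝ => ‖T θ m‖) (1 / 8) := by
  intro θ
  have key : T (θ + 1 / 8) m = Complex.exp (((π / 4 : ℝ) : ℂ) * Complex.I) * T θ m := by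
    rw [T, T, Finset.mul_sum]
    refine Finset.sum_congr rfl fun j hj => ?_
    obtain ⟨i, rfl⟩ : ∃ i, j = i + 1 := ⟨j - 1, by have := (Finset.mem_Icc.mp hj).1; omega⟩
    obtain ⟨k, hk⟩ : ∃ k, i * (i + 1) = 2 * k := (Nat.even_mul_succ_self i).exists_two_nsmul _
    have hkC : ((i : ℂ)) * ((i : ℂ) + 1) = 2 * (k : ℂ) := by exact_mod_cast congrArg (Nat.cast : ℕ → ℂ) hk
    rw [← Complex.exp_add]
    have harg : (2 : ℂ) * π * Complex.I * ((θ + 1 / 8 : ℝ) : ℂ) * (2 * ((i + 1 : ℕ) : ℂ) - 1) ^ 2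
        = ((π / 4 : ℝ) : ℂ) * Complex.I
          + 2 * (π : ℂ) * Complex.I * (θ : ℂ) * (2 * ((i + 1 : ℕ) : ℂ) - 1) ^ 2
          + ((k : ℤ) : ℂ) * (2 * π * Complex.I) := by
      push_cast
      linear_combination (π : ℂ) * Complex.I * hkC
    rw [harg, Complex.exp_add, Complex.exp_int_mul_two_pi_mul_I, mul_one]
  show ‖T (θ + 1 / 8) m‖ = ‖T θ m‖
  rw [key, norm_mul]
  have h1 : ‖Complex.exp (((π / 4 : ℝ) : ℂ) * Complex.I)‖ = 1 :=
    Complex.norm_exp_ofReal_mul_I _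
  rw [h1, one_mul]


lemma cont_normT (m : ℕ) : Continuous fun θ : ℝ => ‖T θ m‖ := by
  refine Continuous.norm ?_
  simp only [T]
  refine continuous_finset_sum _ fun j _ => ?_
  exact Complex.continuous_exp.comp
    ((continuous_const.mul Complex.continuous_ofReal).mul continuous_const)

lemma cont_normW (m : ℕ) : Continuous fun ω : ℝ => ‖W ω m‖ := by
  refine Continuous.norm ?_
  simp only [W]
  refine continuous_finset_sum _ fun j _ => ?_
  exact Complex.continuous_exp.comp
    ((continuous_const.mul Complex.continuous_ofReal).mul continuous_const)

lemma intT_quarter (m : ℕ) :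
    (4 : ℝ) * (∫ θ in (0:ℝ)..(1/4), ‖T θ m‖) = ∫ θ in (0:ℝ)..1, ‖T θ m‖ := by
  have hint : ∀ t1 t2 : ℝ, IntervalIntegrable (fun θ => ‖T θ m‖) volume t1 t2 :=
    fun t1 t2 => (cont_normT m).intervalIntegrable t1 t2
  have h2 := Function.Periodic.intervalIntegral_add_zsmul_eq (T_per m) 2 0 hint
  have h8 := Function.Periodic.intervalIntegral_add_zsmul_eq (T_per m) 8 0 hint
  norm_num at h2 h8
  rw [h2, h8]
  ring

lemma intS_eq (m : ℕ) :
    (∫ ω in (0:ℝ)..1, ‖S ω m‖) = ∫ θ in (0:ℝ)..1, ‖T θ m‖ := by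
  have h1 : (∫ ω in (0:ℝ)..1, ‖S ω m‖) = ∫ ω in (0:ℝ)..1, ‖T (ω / 4) m‖ := by
    simp only [normS_eq]
  rw [h1, intervalIntegral.integral_comp_div (fun θ => ‖T θ m‖) (by norm_num : (4:ℝ) ≠ 0)]
  rw [← intT_quarter m]
  norm_num

lemma intW4_eq (m : ℕ) :
    (∫ θ in (0:ℝ)..1, ‖W (4 * θ) m‖) = ∫ ω in (0:ℝ)..1, ‖W ω m‖ := by
  have hint : ∀ t1 t2 : ℝ, IntervalIntegrable (fun ω => ‖W ω m‖) volume t1 t2 :=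
    fun t1 t2 => (cont_normW m).intervalIntegrable t1 t2
  rw [intervalIntegral.integral_comp_mul_left (fun ω => ‖W ω m‖) (by norm_num : (4:ℝ) ≠ 0)]
  have h4 := Function.Periodic.intervalIntegral_add_zsmul_eq (W_per m) 4 0 hint
  norm_num at h4 ⊢
  rw [h4]
  ring


lemma intW4_integrable (m : ℕ) (t1 t2 : ℝ) :
    IntervalIntegrable (fun θ : ℝ => ‖W (4 * θ) m‖) volume t1 t2 :=
  ((cont_normW m).comp (continuous_const.mul continuous_id)).intervalIntegrable t1 t2

lemma int_lower (m : ℕ) :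
    (∫ ω in (0:ℝ)..1, ‖W ω (2 * m)‖) - (∫ ω in (0:ℝ)..1, ‖W ω m‖)
      ≤ ∫ ω in (0:ℝ)..1, ‖S ω m‖ := by
  rw [intS_eq, ← intW4_eq m,
    ← intervalIntegral.integral_sub ((cont_normW (2 * m)).intervalIntegrable _ _)
      (intW4_integrable m _ _)]
  refine intervalIntegral.integral_mono_on (by norm_num)
    (((cont_normW (2 * m)).intervalIntegrable _ _).sub (intW4_integrable m _ _))
    ((cont_normT m).intervalIntegrable _ _) fun θ _ => ?_
  have : T θ m = W θ (2 * m) - W (4 * θ) m := T_eq θ m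
  calc ‖W θ (2 * m)‖ - ‖W (4 * θ) m‖ ≤ ‖W θ (2 * m) - W (4 * θ) m‖ := norm_sub_norm_le _ _
    _ = ‖T θ m‖ := by rw [← this]

lemma int_upper (m : ℕ) :
    (∫ ω in (0:ℝ)..1, ‖S ω m‖)
      ≤ (∫ ω in (0:ℝ)..1, ‖W ω (2 * m)‖) + ∫ ω in (0:ℝ)..1, ‖W ω m‖ := by
  rw [intS_eq, ← intW4_eq m,
    ← intervalIntegral.integral_add ((cont_normW (2 * m)).intervalIntegrable _ _)
      (intW4_integrable m _ _)]
  refine intervalIntegral.integral_mono_on (by norm_num)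
    ((cont_normT m).intervalIntegrable _ _)
    (((cont_normW (2 * m)).intervalIntegrable _ _).add (intW4_integrable m _ _)) fun θ _ => ?_
  have : T θ m = W θ (2 * m) - W (4 * θ) m := T_eq θ m
  calc ‖T θ m‖ = ‖W θ (2 * m) - W (4 * θ) m‖ := by rw [this]
    _ ≤ ‖W θ (2 * m)‖ + ‖W (4 * θ) m‖ := norm_sub_le _ _

/-- If `(1/√m) ∫₀¹ |W_m(ω)| dω → C > 0`, then
`liminf_{m→∞} (1/√m) ∫₀¹ |S_m(ω)| dω ≥ (√2 - 1) C`. -/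
theorem stmt_14 (C : ℝ) (hC : 0 < C)
    (h : Filter.Tendsto
      (fun m : ℕ => (1 / Real.sqrt m) * ∫ ω in (0:ℝ)..1, ‖W ω m‖)
      Filter.atTop (nhds C)) :
    (Real.sqrt 2 - 1) * C ≤
      Filter.liminf
        (fun m : ℕ => (1 / Real.sqrt m) * ∫ ω in (0:ℝ)..1, ‖S ω m‖)
        Filter.atTop := by
  set a : ℕ → ℝ := fun m : ℕ => (1 / Real.sqrt m) * ∫ ω in (0:ℝ)..1, ‖W ω m‖ with ha
  set B : ℕ → ℝ := fun m : ℕ => (1 / Real.sqrt m) * ∫ ω in (0:ℝ)..1, ‖S ω m‖ with hB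
  have h2m : Filter.Tendsto (fun m : ℕ => 2 * m) Filter.atTop Filter.atTop :=
    Filter.tendsto_atTop_mono (fun n => by simp [id]; omega) Filter.tendsto_id
  have ha2 : Filter.Tendsto (fun m => a (2 * m)) Filter.atTop (nhds C) := h.comp h2m
  have hg : Filter.Tendsto (fun m => Real.sqrt 2 * a (2 * m) - a m) Filter.atTop
      (nhds (Real.sqrt 2 * C - C)) := (ha2.const_mul _).sub h
  have hu : Filter.Tendsto (fun m => Real.sqrt 2 * a (2 * m) + a m) Filter.atTop
      (nhds (Real.sqrt 2 * C + C)) := (ha2.const_mul _).add h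
  have hrel : ∀ m : ℕ, 1 ≤ m →
      (1 / Real.sqrt m) * ∫ ω in (0:ℝ)..1, ‖W ω (2 * m)‖ = Real.sqrt 2 * a (2 * m) := by
    intro m hm
    have hmpos : (0 : ℝ) < Real.sqrt m := Real.sqrt_pos.mpr (by exact_mod_cast hm)
    have hs : Real.sqrt ((2 * m : ℕ) : ℝ) = Real.sqrt 2 * Real.sqrt m := by
      push_cast
      rw [Real.sqrt_mul (by norm_num)]
    simp only [ha, hs]
    have h2pos : (0 : ℝ) < Real.sqrt 2 := Real.sqrt_pos.mpr (by norm_num)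
    field_simp
  have hmpos' : ∀ m : ℕ, 1 ≤ m → (0 : ℝ) ≤ 1 / Real.sqrt m := by
    intro m hm
    positivity
  have hlow : ∀ᶠ m in Filter.atTop, Real.sqrt 2 * a (2 * m) - a m ≤ B m := by
    filter_upwards [Filter.eventually_ge_atTop 1] with m hm
    have := mul_le_mul_of_nonneg_left (int_lower m) (hmpos' m hm)
    rw [mul_sub] at this
    calc Real.sqrt 2 * a (2 * m) - a m
        = (1 / Real.sqrt m) * (∫ ω in (0:ℝ)..1, ‖W ω (2 * m)‖)
          - (1 / Real.sqrt m) * ∫ ω in (0:ℝ)..1, ‖W ω m‖ := by rw [hrel m hm]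
      _ ≤ (1 / Real.sqrt m) * ∫ ω in (0:ℝ)..1, ‖S ω m‖ := this
      _ = B m := rfl
  have hupp : ∀ᶠ m in Filter.atTop, B m ≤ Real.sqrt 2 * a (2 * m) + a m := by
    filter_upwards [Filter.eventually_ge_atTop 1] with m hm
    have := mul_le_mul_of_nonneg_left (int_upper m) (hmpos' m hm)
    rw [mul_add] at this
    calc B m = (1 / Real.sqrt m) * ∫ ω in (0:ℝ)..1, ‖S ω m‖ := rfl
      _ ≤ (1 / Real.sqrt m) * (∫ ω in (0:ℝ)..1, ‖W ω (2 * m)‖)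
          + (1 / Real.sqrt m) * ∫ ω in (0:ℝ)..1, ‖W ω m‖ := this
      _ = Real.sqrt 2 * a (2 * m) + a m := by rw [hrel m hm]
  have hBbdd : Filter.IsBoundedUnder (· ≤ ·) Filter.atTop B :=
    hu.isBoundedUnder_le.mono_le hupp
  have hcob : Filter.IsCoboundedUnder (· ≥ ·) Filter.atTop B :=
    hBbdd.isCoboundedUnder_ge
  have key : Filter.liminf (fun m => Real.sqrt 2 * a (2 * m) - a m) Filter.atTop
      ≤ Filter.liminf B Filter.atTop :=
    Filter.liminf_le_liminf hlow hg.isBoundedUnder_ge hcob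
  rw [hg.liminf_eq] at key
  calc (Real.sqrt 2 - 1) * C = Real.sqrt 2 * C - C := by ring
    _ ≤ Filter.liminf B Filter.atTop := key
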